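/- Let G be a graph, let U₁, …, U_l be a partition of V(G), and for each i let S_i be a minimum dominating set of the induced subgraph G[U_i]. Let S* be any dominating set of G and let B be the set of vertices having a neighbor in a different part of the partition. Then S = ⋃ᵢ S_i is a dominating set of G with |S| ≤ |S*| + |B|. -/

import Mathlib

/-- The closed neighborhood `N[v]` of a vertex. -/
def closedNbr {V : Type} (G : SimpleGraph V) (v : V) : Set V :=
  insert v (G.neighborSet v)

/-- `N[A] = ⋃ a ∈ A, N[a]`. -/
def closedNbrs {V : Type} (G : SimpleGraph V) (A : Set V) : Set V :=
  ⋃ a ∈ A, closedNbr G a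

/-- `D` is a dominating set of `G`. -/
def IsDominatingSet {V : Type} (G : SimpleGraph V) (D : Set V) : Prop :=
  ∀ v : V, v ∈ closedNbrs G D

/-- `S` dominates the subgraph of `G` induced on `U`. -/
def DominatesOn {V : Type} (G : SimpleGraph V) (U S : Set V) : Prop :=
  S ⊆ U ∧ ∀ v ∈ U, v ∈ S ∨ ∃ u ∈ S, G.Adj u v

lemma ncard_iUnion_le_sum {V : Type} [Fintype V] (l : ℕ) (f : Fin l → Set V) :
    (⋃ i, f i).ncard ≤ ∑ i, (f i).ncard := by
  classical
  rw [Set.ncard_eq_toFinset_card']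
  have h : (⋃ i, f i).toFinset = Finset.univ.biUnion (fun i => (f i).toFinset) := by
    ext x; simp
  rw [h]
  calc (Finset.univ.biUnion fun i => (f i).toFinset).card
      ≤ ∑ i, (f i).toFinset.card := Finset.card_biUnion_le
    _ = ∑ i, (f i).ncard := by simp [Set.ncard_eq_toFinset_card']

lemma sum_le_ncard_iUnion {V : Type} [Fintype V] (l : ℕ) (f : Fin l → Set V)
    (h : Pairwise fun i j => Disjoint (f i) (f j)) :
    ∑ i, (f i).ncard ≤ (⋃ i, f i).ncard := by
  classical
  rw [Set.ncard_eq_toFinset_card']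
  have he : (⋃ i, f i).toFinset = Finset.univ.biUnion (fun i => (f i).toFinset) := by
    ext x; simp
  rw [he, Finset.card_biUnion]
  · simp [Set.ncard_eq_toFinset_card']
  · intro i _ j _ hij
    have := h hij
    rw [Function.onFun, Finset.disjoint_left]
    intro a ha hb
    simp only [Set.mem_toFinset] at ha hb
    exact this.le_bot ⟨ha, hb⟩ |>.elim

/-- Let `U₁, …, U_l` partition `V(G)`, let `S_i` be a minimum dominating set of `G[U_i]`, let
`S*` be any dominating set of `G`, and let `B` be the set of vertices with a neighbor in a
different part.  Then `S = ⋃ S_i` is a dominating set of `G` with `|S| ≤ |S*| + |B|`. -/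
theorem stmt15 {V : Type} [Fintype V] (G : SimpleGraph V)
    (l : ℕ) (U : Fin l → Set V)
    (hdisj : Pairwise fun i j => Disjoint (U i) (U j))
    (hcover : (⋃ i, U i) = Set.univ)
    (S : Fin l → Set V)
    (hSdom : ∀ i, DominatesOn G (U i) (S i))
    (hSmin : ∀ i, ∀ T : Set V, DominatesOn G (U i) T → (S i).ncard ≤ T.ncard)
    (Sstar : Set V) (hSstar : IsDominatingSet G Sstar)
    (B : Set V)
    (hB : B = {v | ∃ u, G.Adj v u ∧ ∃ i j, i ≠ j ∧ v ∈ U i ∧ u ∈ U j}) :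
    IsDominatingSet G (⋃ i, S i) ∧ (⋃ i, S i).ncard ≤ Sstar.ncard + B.ncard := by
  classical
  have hmem : ∀ v : V, ∃ i, v ∈ U i := by
    intro v
    have : v ∈ ⋃ i, U i := hcover ▸ Set.mem_univ v
    simpa using this
  constructor
  · -- domination
    intro v
    obtain ⟨i, hvi⟩ := hmem v
    rcases (hSdom i).2 v hvi with hv | ⟨u, hu, huv⟩
    · exact Set.mem_biUnion (Set.mem_iUnion.2 ⟨i, hv⟩) (Set.mem_insert v _)
    · exact Set.mem_biUnion (Set.mem_iUnion.2 ⟨i, hu⟩)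
        (Set.mem_insert_of_mem _ (by simpa [SimpleGraph.neighborSet] using huv))
  · -- cardinality
    set T : Fin l → Set V := fun i => (Sstar ∪ B) ∩ U i with hT
    have hTdom : ∀ i, DominatesOn G (U i) (T i) := by
      intro i
      refine ⟨Set.inter_subset_right, fun v hv => ?_⟩
      rcases hSstar v with hmem'
      simp only [closedNbrs, Set.mem_iUnion] at hmem'
      obtain ⟨u, hu, hvu⟩ := hmem'
      rcases hvu with rfl | hadj
      · exact Or.inl ⟨Or.inl hu, hv⟩
      · -- u ∈ Sstar, G.Adj u v
        have hadj' : G.Adj u v := hadj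
        obtain ⟨j, huj⟩ := hmem u
        by_cases hij : j = i
        · subst hij
          exact Or.inr ⟨u, ⟨Or.inl hu, huj⟩, hadj'⟩
        · -- v has a neighbor in a different part, so v ∈ B
          have hvB : v ∈ B := by
            rw [hB]
            exact ⟨u, hadj'.symm, i, j, fun h => hij h.symm, hv, huj⟩
          exact Or.inl ⟨Or.inr hvB, hv⟩
    have hSle : ∀ i, (S i).ncard ≤ (T i).ncard := fun i => hSmin i (T i) (hTdom i)
    have hTdisj : Pairwise fun i j => Disjoint (T i) (T j) := fun i j hij =>
      ((hdisj hij).mono Set.inter_subset_right Set.inter_subset_right)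
    calc (⋃ i, S i).ncard ≤ ∑ i, (S i).ncard := ncard_iUnion_le_sum l S
      _ ≤ ∑ i, (T i).ncard := Finset.sum_le_sum fun i _ => hSle i
      _ ≤ (⋃ i, T i).ncard := sum_le_ncard_iUnion l T hTdisj
      _ ≤ (Sstar ∪ B).ncard := by
          apply Set.ncard_le_ncard _ (Set.toFinite _)
          exact Set.iUnion_subset fun i => Set.inter_subset_left
      _ ≤ Sstar.ncard + B.ncard := Set.ncard_union_le _ _
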